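/- Let u be a nonconstant inner function and let B_{e₁} : K_u → K_u^⊥ be the operator B_{e₁} f = (I − P_{K_u})(e₁ · f) (i.e., B_φ with symbol φ(ζ) = ζ). Then m(B_{e₁}) = 0 if dim K_u > 1, and m(B_{e₁}) = √(1 − |u(0)|²) if dim K_u = 1. -/

import Mathlib

open MeasureTheory Complex
open scoped InnerProductSpace ENNReal

noncomputable section

namespace DTTO

instance fact2pi : Fact (0 < 2 * Real.pi) := ⟨by positivity⟩

/-- The circle, realized as `ℝ / 2πℤ`. -/
abbrev 𝕋c := AddCircle (2 * Real.pi)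

/-- Normalized Haar (Lebesgue) measure on the circle. -/
abbrev μT : Measure 𝕋c := AddCircle.haarAddCircle

/-- `L²(𝕋)`. -/
abbrev L2 := Lp ℂ 2 μT

/-- `L∞(𝕋)`. -/
abbrev Linf := Lp ℂ ⊤ μT

lemma memL2_smul (φ : Linf) (f : L2) : MemLp (⇑φ • ⇑f) 2 μT :=
  (Lp.memLp f).smul (Lp.memLp φ)

/-- Multiplication operator `M_φ : L² → L²` by a function `φ ∈ L∞`. -/
def Mmul (φ : Linf) : L2 →L[ℂ] L2 :=
  LinearMap.mkContinuous
    { toFun := fun f => (memL2_smul φ f).toLp _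
      map_add' := fun f g => by
        refine Lp.ext ?_
        filter_upwards [MemLp.coeFn_toLp (memL2_smul φ (f + g)),
          MemLp.coeFn_toLp (memL2_smul φ f), MemLp.coeFn_toLp (memL2_smul φ g),
          Lp.coeFn_add f g,
          Lp.coeFn_add ((memL2_smul φ f).toLp _) ((memL2_smul φ g).toLp _)] with
            x h1 h2 h3 h4 h5
        rw [h1, h5]
        simp only [Pi.add_apply, h2, h3]
        simp only [Pi.smul_apply', h4, Pi.add_apply, smul_add]
      map_smul' := fun c f => by
        refine Lp.ext ?_
        filter_upwards [MemLp.coeFn_toLp (memL2_smul φ (c • f)),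
          MemLp.coeFn_toLp (memL2_smul φ f),
          Lp.coeFn_smul c f,
          Lp.coeFn_smul c ((memL2_smul φ f).toLp _)] with x h1 h2 h3 h4
        rw [h1, RingHom.id_apply, h4]
        simp only [Pi.smul_apply, Pi.smul_apply', h2, h3]
        exact smul_comm _ _ _ }
    ‖φ‖ (fun f => by
      simp only [LinearMap.coe_mk, AddHom.coe_mk]
      rw [Lp.norm_toLp, Lp.norm_def, Lp.norm_def]
      rw [← ENNReal.toReal_mul]
      refine ENNReal.toReal_mono ?_ ?_
      · exact ENNReal.mul_ne_top (Lp.eLpNorm_ne_top φ) (Lp.eLpNorm_ne_top f)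
      · exact eLpNorm_smul_le_eLpNorm_top_mul_eLpNorm 2 (Lp.aestronglyMeasurable f) ⇑φ)

/-- The canonical inclusion `L∞ ⊆ L²` (the measure is finite). -/
def toL2 (φ : Linf) : L2 := ((Lp.memLp φ).mono_exponent le_top).toLp _

/-- The Hardy space `H²`, the closed linear span in `L²` of the exponentials `e_n`, `n ≥ 0`. -/
def H2 : Submodule ℂ L2 :=
  (Submodule.span ℂ (Set.range fun n : ℕ => (fourierLp 2 (n : ℤ) : L2))).topologicalClosure

instance : CompleteSpace H2 := (Submodule.isClosed_topologicalClosure _).completeSpace_coe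

/-- `H²₋ = L² ⊖ H²`. -/
def Hminus : Submodule ℂ L2 := H2ᗮ

instance : CompleteSpace Hminus := (Submodule.isClosed_orthogonal _).completeSpace_coe

/-- `H∞ = H² ∩ L∞`. -/
def MemHinf (φ : Linf) : Prop := toL2 φ ∈ H2

/-- An inner function: an element of `H² ∩ L∞` of modulus one a.e. -/
structure IsInnerFn (u : Linf) : Prop where
  memH2 : MemHinf u
  unimod : ∀ᵐ z ∂μT, ‖u z‖ = 1

/-- `u` is nonconstant (not a.e. equal to a constant). -/
def Nonconst (u : Linf) : Prop := ¬ ∃ c : ℂ, (⇑u : 𝕋c → ℂ) =ᵐ[μT] fun _ => c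

/-- The subspace `uH²` of `L²`. -/
def uH2 (u : Linf) : Submodule ℂ L2 := H2.map (Mmul u).toLinearMap

/-- The model space `K_u = H² ⊖ uH² = H² ∩ (uH²)ᗮ`. -/
def Ku (u : Linf) : Submodule ℂ L2 := H2 ⊓ (uH2 u)ᗮ

lemma isClosed_Ku (u : Linf) : IsClosed ((Ku u : Set L2)) := by
  have h : (Ku u : Set L2) = (H2 : Set L2) ∩ ((uH2 u)ᗮ : Set L2) := rfl
  rw [h]
  exact (Submodule.isClosed_topologicalClosure _).inter (Submodule.isClosed_orthogonal _)

instance (u : Linf) : CompleteSpace (Ku u) := (isClosed_Ku u).completeSpace_coe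

/-- `K_u^⊥ = L² ⊖ K_u`. -/
def KuP (u : Linf) : Submodule ℂ L2 := (Ku u)ᗮ

instance (u : Linf) : CompleteSpace (KuP u) := (Submodule.isClosed_orthogonal _).completeSpace_coe

/-- Dual truncated Toeplitz operator `D_φ` on `K_u^⊥`. -/
def Dop (u φ : Linf) : KuP u →L[ℂ] KuP u :=
  Submodule.orthogonalProjectionOnto (KuP u) ∘L Mmul φ ∘L (KuP u).subtypeL

/-- Truncated Toeplitz operator `A_φ` on `K_u`. -/
def Aop (u φ : Linf) : Ku u →L[ℂ] Ku u :=
  Submodule.orthogonalProjectionOnto (Ku u) ∘L Mmul φ ∘L (Ku u).subtypeL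

/-- The operator `B_φ : K_u → K_u^⊥`, `B_φ f = (I - P_{K_u})(φ f)`. -/
def Bop (u φ : Linf) : Ku u →L[ℂ] KuP u :=
  Submodule.orthogonalProjectionOnto (KuP u) ∘L Mmul φ ∘L (Ku u).subtypeL

/-- Toeplitz operator `T_φ : H² → H²`. -/
def Top (φ : Linf) : H2 →L[ℂ] H2 :=
  Submodule.orthogonalProjectionOnto H2 ∘L Mmul φ ∘L H2.subtypeL

/-- Hankel operator `H_φ : H² → H²₋`. -/
def Hop (φ : Linf) : H2 →L[ℂ] Hminus :=
  Submodule.orthogonalProjectionOnto Hminus ∘L Mmul φ ∘L H2.subtypeL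

/-- The exponential `e₁(ζ) = ζ` as an element of `L∞`. -/
def e1 : Linf := fourierLp ⊤ 1

/-- The exponential `e₋₁(ζ) = ζ̄` as an element of `L∞`. -/
def eneg1 : Linf := fourierLp ⊤ (-1)

/-- The operator `Q : H²₋ → H²₋`, `Q g = P₋(e₁ g)`. -/
def Qop : Hminus →L[ℂ] Hminus :=
  Submodule.orthogonalProjectionOnto Hminus ∘L Mmul e1 ∘L Hminus.subtypeL

/-- `u(0)`, the 0-th Fourier coefficient. -/
def coef0 (u : Linf) : ℂ := fourierCoeff (⇑u) 0

/-- Minimum modulus of a bounded operator. -/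
def minMod {E F : Type*} [NormedAddCommGroup E] [NormedSpace ℂ E]
    [NormedAddCommGroup F] [NormedSpace ℂ F] (T : E →L[ℂ] F) : ℝ :=
  ⨅ x : {x : E // ‖x‖ = 1}, ‖T x.1‖

/-- Complex conjugation on `L∞`. -/
lemma memLinf_star (φ : Linf) : MemLp (fun z => (starRingEnd ℂ) (φ z)) ⊤ μT := by
  refine ⟨continuous_star.comp_aestronglyMeasurable (Lp.aestronglyMeasurable φ), ?_⟩
  rw [eLpNorm_congr_norm_ae (g := ⇑φ) (Filter.Eventually.of_forall fun z => norm_star _)]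
  exact Lp.eLpNorm_lt_top φ

/-- The complex conjugate `φ̄ ∈ L∞` of `φ ∈ L∞`. -/
def conjL (φ : Linf) : Linf := (memLinf_star φ).toLp _

lemma memLinf_mul (φ ψ : Linf) : MemLp (⇑φ • ⇑ψ) ⊤ μT :=
  (Lp.memLp ψ).smul (Lp.memLp φ)

/-- The pointwise product of two elements of `L∞`. -/
def mulL (φ ψ : Linf) : Linf := (memLinf_mul φ ψ).toLp _

end DTTO

namespace DTTO

lemma inner_fourierLp_eq_zero {m n : ℤ} (h : m ≠ n) :
    (inner ℂ (fourierLp 2 m : L2) (fourierLp 2 n : L2) : ℂ) = 0 := by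
  have hcoe := congrFun (coe_fourierBasis (T := 2 * Real.pi))
  have h2 := (fourierBasis (T := 2 * Real.pi)).orthonormal.2 (i := m) (j := n) h
  simpa only [hcoe] using h2

lemma span_le_orth_em1 :
    Submodule.span ℂ (Set.range fun n : ℕ => (fourierLp 2 (n : ℤ) : L2))
      ≤ (ℂ ∙ (fourierLp 2 (-1) : L2))ᗮ := by
  rw [Submodule.span_le]
  rintro x ⟨n, rfl⟩
  rw [SetLike.mem_coe, Submodule.mem_orthogonal]
  intro w hw
  obtain ⟨c, rfl⟩ := Submodule.mem_span_singleton.1 hw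
  rw [inner_smul_left, inner_fourierLp_eq_zero (by omega : (-1 : ℤ) ≠ (n : ℤ)), mul_zero]

lemma H2_le_orth_em1 : H2 ≤ (ℂ ∙ (fourierLp 2 (-1) : L2))ᗮ :=
  Submodule.topologicalClosure_minimal _ span_le_orth_em1 (Submodule.isClosed_orthogonal _)

/-- `e₋₁ ∈ H²₋`. -/
lemma em1_mem : (fourierLp 2 (-1) : L2) ∈ Hminus := by
  unfold Hminus
  rw [Submodule.mem_orthogonal]
  intro v hv
  have h := H2_le_orth_em1 hv
  rw [Submodule.mem_orthogonal] at h
  exact inner_eq_zero_symm.mp (h _ (Submodule.mem_span_singleton_self _))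

/-- `e₋₁` as an element of `H²₋`. -/
def em1 : Hminus := ⟨(fourierLp 2 (-1) : L2), em1_mem⟩

/-- For `f ∈ K_u`, the function `u f ∈ uH² ⊆ K_u^⊥`. -/
lemma mul_mem_KuP (u : Linf) (f : Ku u) : Mmul u (f : L2) ∈ KuP u := by
  unfold KuP
  rw [Submodule.mem_orthogonal]
  intro v hv
  have hv2 : v ∈ (uH2 u)ᗮ := (Submodule.mem_inf.1 hv).2
  have hm : Mmul u (f : L2) ∈ uH2 u :=
    Submodule.mem_map_of_mem (Submodule.mem_inf.1 f.2).1
  rw [Submodule.mem_orthogonal] at hv2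
  exact inner_eq_zero_symm.mp (hv2 _ hm)

lemma Ku_le_H2 (u : Linf) : Ku u ≤ H2 := inf_le_left

/-- The inclusion `K_u ⊆ H²` as a continuous linear map. -/
def KuIncl (u : Linf) : Ku u →L[ℂ] H2 :=
  LinearMap.mkContinuous (Submodule.inclusion (Ku_le_H2 u)) 1
    (fun f => by rw [one_mul]; exact le_of_eq rfl)

end DTTO

namespace DTTO

lemma Mmul_coeFn (φ : Linf) (f : L2) : ⇑(Mmul φ f) =ᵐ[μT] ⇑φ • ⇑f :=
  MemLp.coeFn_toLp (memL2_smul φ f)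

lemma toL2_coeFn (φ : Linf) : ⇑(toL2 φ) =ᵐ[μT] ⇑φ := MemLp.coeFn_toLp _

lemma inner_L2 (f g : L2) : ⟪f, g⟫_ℂ = ∫ z, (starRingEnd ℂ) (f z) * g z ∂μT := by
  rw [MeasureTheory.L2.inner_def]
  refine integral_congr_ae (Filter.Eventually.of_forall fun a => ?_)
  simp [RCLike.inner_apply, mul_comm]

lemma inner_E (m n : ℤ) :
    ⟪(fourierLp 2 m : L2), (fourierLp 2 n : L2)⟫_ℂ = if m = n then 1 else 0 := by
  split_ifs with h
  · subst h
    have h1 : ‖(fourierLp 2 m : L2)‖ = 1 := by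
      have := (fourierBasis (T := 2 * Real.pi)).orthonormal.1 m
      rwa [coe_fourierBasis] at this
    rw [@inner_self_eq_norm_sq_to_K ℂ, h1]
    norm_num
  · exact inner_fourierLp_eq_zero h


lemma e1_coeFn : ⇑(e1) =ᵐ[μT] ⇑(fourier (T := 2 * Real.pi) 1) := coeFn_fourierLp ⊤ 1

lemma eneg1_coeFn : ⇑(eneg1) =ᵐ[μT] ⇑(fourier (T := 2 * Real.pi) (-1)) := coeFn_fourierLp ⊤ (-1)

lemma fourier_conj_mul (m k : ℤ) (z : 𝕋c) :
    (starRingEnd ℂ) (fourier m z) * fourier k z = (starRingEnd ℂ) (fourier (m - k) z) := by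
  rw [← fourier_neg, ← fourier_neg, ← fourier_add]
  ring_nf

lemma inner_E_Mmul_e1 (m : ℤ) (f : L2) :
    ⟪(fourierLp 2 m : L2), Mmul e1 f⟫_ℂ = ⟪(fourierLp 2 (m - 1) : L2), f⟫_ℂ := by
  rw [inner_L2, inner_L2]
  refine integral_congr_ae ?_
  filter_upwards [Mmul_coeFn e1 f, coeFn_fourierLp 2 m, coeFn_fourierLp 2 (m - 1),
    e1_coeFn] with z h1 h2 h3 h4
  simp only [h1, h2, h3, Pi.smul_apply', smul_eq_mul, h4]
  rw [← mul_assoc, fourier_conj_mul]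

lemma inner_Mmul_e1_right (x f : L2) : ⟪x, Mmul e1 f⟫_ℂ = ⟪Mmul eneg1 x, f⟫_ℂ := by
  rw [inner_L2, inner_L2]
  refine integral_congr_ae ?_
  filter_upwards [Mmul_coeFn e1 f, Mmul_coeFn eneg1 x, e1_coeFn, eneg1_coeFn] with z h1 h2 h3 h4
  simp only [h1, h2, Pi.smul_apply', smul_eq_mul, h3, h4, map_mul, ← fourier_neg]
  ring_nf

lemma inner_Mmul_eneg1_right (x f : L2) : ⟪x, Mmul eneg1 f⟫_ℂ = ⟪Mmul e1 x, f⟫_ℂ := by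
  rw [inner_L2, inner_L2]
  refine integral_congr_ae ?_
  filter_upwards [Mmul_coeFn eneg1 f, Mmul_coeFn e1 x, e1_coeFn, eneg1_coeFn] with z h1 h2 h3 h4
  simp only [h1, h2, Pi.smul_apply', smul_eq_mul, h3, h4, map_mul, ← fourier_neg]
  ring_nf

lemma inner_Mmul_unimod (ψ : Linf) (hψ : ∀ᵐ z ∂μT, ‖ψ z‖ = 1) (x y : L2) :
    ⟪Mmul ψ x, Mmul ψ y⟫_ℂ = ⟪x, y⟫_ℂ := by
  rw [inner_L2, inner_L2]
  refine integral_congr_ae ?_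
  filter_upwards [Mmul_coeFn ψ x, Mmul_coeFn ψ y, hψ] with z h1 h2 h3
  simp only [h1, h2, Pi.smul_apply', smul_eq_mul, map_mul]
  have : (starRingEnd ℂ) (ψ z) * ψ z = 1 := by
    rw [Complex.conj_mul', h3]
    norm_num
  calc (starRingEnd ℂ) (ψ z) * (starRingEnd ℂ) (x z) * (ψ z * y z)
      = ((starRingEnd ℂ) (ψ z) * ψ z) * ((starRingEnd ℂ) (x z) * y z) := by ring
    _ = (starRingEnd ℂ) (x z) * y z := by rw [this, one_mul]

lemma Mmul_Mmul (φ ψ : Linf) (f : L2) : Mmul φ (Mmul ψ f) = Mmul ψ (Mmul φ f) := by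
  refine Lp.ext ?_
  filter_upwards [Mmul_coeFn φ (Mmul ψ f), Mmul_coeFn ψ (Mmul φ f), Mmul_coeFn ψ f,
    Mmul_coeFn φ f] with z h1 h2 h3 h4
  simp only [h1, h2, Pi.smul_apply', h3, h4, smul_eq_mul]
  ring

lemma Mmul_e1_E (n : ℤ) : Mmul e1 (fourierLp 2 n) = (fourierLp 2 (n + 1) : L2) := by
  refine Lp.ext ?_
  filter_upwards [Mmul_coeFn e1 (fourierLp 2 n), e1_coeFn, coeFn_fourierLp 2 n,
    coeFn_fourierLp 2 (n + 1)] with z h1 h2 h3 h4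
  simp only [h1, Pi.smul_apply', smul_eq_mul, h2, h3, h4]
  rw [fourier_add, mul_comm]

lemma Mmul_eneg1_E (n : ℤ) : Mmul eneg1 (fourierLp 2 n) = (fourierLp 2 (n - 1) : L2) := by
  refine Lp.ext ?_
  filter_upwards [Mmul_coeFn eneg1 (fourierLp 2 n), eneg1_coeFn, coeFn_fourierLp 2 n,
    coeFn_fourierLp 2 (n - 1)] with z h1 h2 h3 h4
  simp only [h1, Pi.smul_apply', smul_eq_mul, h2, h3, h4]
  rw [show n - 1 = -1 + n by ring, fourier_add]

lemma toL2_eq_Mmul_E0 (u : Linf) : toL2 u = Mmul u (fourierLp 2 0) := by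
  refine Lp.ext ?_
  filter_upwards [toL2_coeFn u, Mmul_coeFn u (fourierLp 2 0), coeFn_fourierLp 2 0]
    with z h1 h2 h3
  simp only [h1, h2, Pi.smul_apply', smul_eq_mul, h3, fourier_zero, mul_one]

lemma inner_E0_toL2 (u : Linf) : ⟪(fourierLp 2 0 : L2), toL2 u⟫_ℂ = coef0 u := by
  rw [inner_L2, coef0, fourierCoeff]
  refine integral_congr_ae ?_
  filter_upwards [toL2_coeFn u, coeFn_fourierLp 2 0] with z h1 h2
  rw [h1, h2, fourier_zero, neg_zero, fourier_zero, map_one, one_mul, one_smul]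

lemma inner_E_Mmul_u (u : Linf) (m n : ℤ) :
    ⟪(fourierLp 2 m : L2), Mmul u (fourierLp 2 n)⟫_ℂ
      = ⟪(fourierLp 2 (m - n) : L2), toL2 u⟫_ℂ := by
  rw [inner_L2, inner_L2]
  refine integral_congr_ae ?_
  filter_upwards [Mmul_coeFn u (fourierLp 2 n), coeFn_fourierLp 2 m, coeFn_fourierLp 2 n,
    coeFn_fourierLp 2 (m - n), toL2_coeFn u] with z h1 h2 h3 h4 h5
  simp only [h1, h2, h4, h5, Pi.smul_apply', smul_eq_mul, h3]
  rw [show (starRingEnd ℂ) (fourier m z) * (u z * fourier n z)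
      = ((starRingEnd ℂ) (fourier m z) * fourier n z) * u z by ring, fourier_conj_mul]


lemma abs_fourier_one (n : ℤ) (z : 𝕋c) : ‖fourier (T := 2 * Real.pi) n z‖ = 1 := by
  exact Circle.norm_coe _

lemma eneg1_unimod : ∀ᵐ z ∂μT, ‖eneg1 z‖ = 1 := by
  filter_upwards [eneg1_coeFn] with z h
  rw [h]
  exact abs_fourier_one _ _

lemma E_mem_H2 (n : ℕ) : (fourierLp 2 (n : ℤ) : L2) ∈ H2 :=
  Submodule.le_topologicalClosure _ (Submodule.subset_span ⟨n, rfl⟩)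

lemma inner_E_eq_zero_of_H2 {f : L2} (hf : f ∈ H2) {m : ℤ} (hm : m < 0) :
    ⟪(fourierLp 2 m : L2), f⟫_ℂ = 0 := by
  have hle : H2 ≤ (ℂ ∙ (fourierLp 2 m : L2))ᗮ := by
    refine Submodule.topologicalClosure_minimal _ ?_ (Submodule.isClosed_orthogonal _)
    rw [Submodule.span_le]
    rintro x ⟨n, rfl⟩
    rw [SetLike.mem_coe, Submodule.mem_orthogonal]
    intro w hw
    obtain ⟨c, rfl⟩ := Submodule.mem_span_singleton.1 hw
    rw [inner_smul_left, inner_fourierLp_eq_zero (by omega : m ≠ (n : ℤ)), mul_zero]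
  exact (Submodule.mem_orthogonal _ _).1 (hle hf) _ (Submodule.mem_span_singleton_self _)

lemma mem_H2_of_inner {x : L2} (h : ∀ m : ℤ, m < 0 → ⟪(fourierLp 2 m : L2), x⟫_ℂ = 0) :
    x ∈ H2 := by
  have hb := (fourierBasis (T := 2 * Real.pi)).hasSum_repr x
  have key := fun (j : ℤ) => congrFun (coe_fourierBasis (T := 2 * Real.pi)) j
  simp only [key] at hb
  refine IsClosed.mem_of_tendsto (Submodule.isClosed_topologicalClosure _) hb ?_
  refine Filter.Eventually.of_forall fun s => ?_
  refine Submodule.sum_mem _ fun i _ => ?_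
  rcases lt_or_ge i 0 with hi | hi
  · have h0 : (fourierBasis (T := 2 * Real.pi)).repr x i = 0 := by
      rw [HilbertBasis.repr_apply_apply]
      simp only [key]
      exact h i hi
    simp only [h0, zero_smul]
    exact Submodule.zero_mem _
  · refine Submodule.smul_mem _ _ ?_
    rw [show i = ((i.toNat : ℕ) : ℤ) from (Int.toNat_of_nonneg hi).symm]
    exact E_mem_H2 _

lemma Mmul_e1_mem_H2 {f : L2} (hf : f ∈ H2) : Mmul e1 f ∈ H2 := by
  refine mem_H2_of_inner fun m hm => ?_
  rw [inner_E_Mmul_e1]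
  exact inner_E_eq_zero_of_H2 hf (by omega)

lemma mem_orth_uH2_of (u : Linf) (x : L2)
    (h : ∀ n : ℕ, ⟪Mmul u (fourierLp 2 (n : ℤ)), x⟫_ℂ = 0) : x ∈ (uH2 u)ᗮ := by
  rw [Submodule.mem_orthogonal]
  intro y hy
  obtain ⟨f, hf, rfl⟩ := hy
  let N : Submodule ℂ L2 :=
    { carrier := {φ | ⟪Mmul u φ, x⟫_ℂ = 0}
      add_mem' := fun {a b} (ha : ⟪Mmul u a, x⟫_ℂ = 0) (hb : ⟪Mmul u b, x⟫_ℂ = 0) => by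
        show ⟪Mmul u (a + b), x⟫_ℂ = 0
        rw [map_add, inner_add_left, ha, hb, add_zero]
      zero_mem' := by
        show ⟪Mmul u 0, x⟫_ℂ = 0
        rw [map_zero, inner_zero_left]
      smul_mem' := fun c a (ha : ⟪Mmul u a, x⟫_ℂ = 0) => by
        show ⟪Mmul u (c • a), x⟫_ℂ = 0
        rw [ContinuousLinearMap.map_smul, inner_smul_left, ha, mul_zero] }
  have hcl : IsClosed (N : Set L2) :=
    isClosed_eq (Continuous.inner ((Mmul u).continuous) continuous_const) continuous_const
  have hle : H2 ≤ N := by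
    refine Submodule.topologicalClosure_minimal _ ?_ hcl
    rw [Submodule.span_le]
    rintro φ ⟨n, rfl⟩
    exact h n
  exact hle hf

lemma uH2_le_KuP (u : Linf) : uH2 u ≤ KuP u := by
  refine le_trans (Submodule.le_orthogonal_orthogonal _) ?_
  exact Submodule.orthogonal_le inf_le_right

lemma Ku_le_KuP_orth (u : Linf) : Ku u ≤ (KuP u)ᗮ := Submodule.le_orthogonal_orthogonal _


/-- The conjugate kernel `k̃₀ = z̄ (u - u(0))`. -/
def kk (u : Linf) : L2 :=
  Mmul eneg1 (toL2 u) - (coef0 u) • (fourierLp 2 (-1) : L2)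

lemma kk_eq (u : Linf) :
    kk u = Mmul eneg1 (toL2 u - (coef0 u) • (fourierLp 2 0 : L2)) := by
  rw [kk, map_sub, ContinuousLinearMap.map_smul, Mmul_eneg1_E]
  norm_num

lemma u_unimod (u : Linf) (hu : IsInnerFn u) :
    ∀ᵐ z ∂μT, ‖u z‖ = 1 := hu.unimod

lemma inner_toL2_self (u : Linf) (hu : IsInnerFn u) : ⟪toL2 u, toL2 u⟫_ℂ = 1 := by
  rw [toL2_eq_Mmul_E0, inner_Mmul_unimod u hu.unimod, inner_E]
  simp

lemma norm_toL2 (u : Linf) (hu : IsInnerFn u) : ‖toL2 u‖ = 1 := by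
  have h2 : ‖toL2 u‖ ^ 2 = 1 := by
    rw [@norm_sq_eq_re_inner ℂ, inner_toL2_self u hu, RCLike.one_re]
  rw [← Real.sqrt_one, ← h2, Real.sqrt_sq (norm_nonneg _)]

lemma kk_mem_Ku (u : Linf) (hu : IsInnerFn u) : kk u ∈ Ku u := by
  rw [Ku, Submodule.mem_inf]
  constructor
  · -- kk ∈ H2
    refine mem_H2_of_inner fun m hm => ?_
    rw [kk, inner_sub_right, inner_smul_right, inner_Mmul_eneg1_right, Mmul_e1_E, inner_E]
    rcases eq_or_lt_of_le (by omega : m ≤ -1) with h | h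
    · rw [if_pos h]
      have : m + 1 = 0 := by omega
      rw [this]
      rw [show ((fourierLp 2 (0 : ℤ) : L2)) = (fourierLp 2 ((0 : ℕ) : ℤ) : L2) by norm_num]
      rw [show ⟪(fourierLp 2 ((0:ℕ) : ℤ) : L2), toL2 u⟫_ℂ = coef0 u from inner_E0_toL2 u]
      ring
    · rw [if_neg (by omega), mul_zero, sub_zero]
      exact inner_E_eq_zero_of_H2 hu.memH2 (by omega)
  · -- kk ⊥ uH2
    refine mem_orth_uH2_of u _ fun n => ?_
    rw [kk, inner_sub_right, inner_smul_right, inner_Mmul_eneg1_right, Mmul_Mmul, Mmul_e1_E]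
    have h1 : ⟪Mmul u (fourierLp 2 ((n : ℤ) + 1)), toL2 u⟫_ℂ = 0 := by
      rw [toL2_eq_Mmul_E0, inner_Mmul_unimod u hu.unimod, inner_E, if_neg (by omega)]
    have h2 : ⟪Mmul u (fourierLp 2 (n : ℤ)), (fourierLp 2 (-1) : L2)⟫_ℂ = 0 := by
      rw [← inner_conj_symm, inner_E_Mmul_u]
      rw [inner_E_eq_zero_of_H2 hu.memH2 (by omega : (-1 : ℤ) - n < 0), map_zero]
    rw [h1, h2, mul_zero, sub_zero]

lemma inner_kk_self (u : Linf) (hu : IsInnerFn u) :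
    ⟪kk u, kk u⟫_ℂ = 1 - (‖coef0 u‖ : ℂ) ^ 2 := by
  have ha : ⟪(fourierLp 2 (0:ℤ) : L2), toL2 u⟫_ℂ = coef0 u := inner_E0_toL2 u
  rw [kk_eq, inner_Mmul_unimod eneg1 eneg1_unimod]
  rw [inner_sub_left, inner_sub_right, inner_sub_right, inner_smul_left, inner_smul_left,
    inner_smul_right, inner_smul_right, inner_toL2_self u hu, inner_E, ha,
    ← inner_conj_symm (toL2 u), ha]
  simp only [if_pos rfl, mul_one]
  rw [Complex.mul_conj, Complex.normSq_eq_norm_sq]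
  push_cast
  ring

lemma norm_kk_sq (u : Linf) (hu : IsInnerFn u) :
    ‖kk u‖ ^ 2 = 1 - ‖coef0 u‖ ^ 2 := by
  rw [@norm_sq_eq_re_inner ℂ, inner_kk_self u hu, ← Complex.ofReal_pow, ← Complex.ofReal_one,
    ← Complex.ofReal_sub]
  exact Complex.ofReal_re _

lemma kk_ne_zero (u : Linf) (hu : IsInnerFn u) (hnc : Nonconst u) : kk u ≠ 0 := by
  intro h
  apply hnc
  have hv : toL2 u - (coef0 u) • (fourierLp 2 0 : L2) = 0 := by
    have h2 : Mmul e1 (kk u) = 0 := by rw [h, map_zero]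
    rw [kk_eq] at h2
    have h3 : Mmul e1 (Mmul eneg1 (toL2 u - (coef0 u) • (fourierLp 2 0 : L2)))
        = toL2 u - (coef0 u) • (fourierLp 2 0 : L2) := by
      refine Lp.ext ?_
      set v := toL2 u - (coef0 u) • (fourierLp 2 0 : L2)
      filter_upwards [Mmul_coeFn e1 (Mmul eneg1 v), Mmul_coeFn eneg1 v, e1_coeFn, eneg1_coeFn]
        with z g1 g2 g3 g4
      simp only [g1, Pi.smul_apply', smul_eq_mul, g2, g3, g4, ← mul_assoc]
      rw [← fourier_add]
      norm_num
    rw [h2] at h3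
    exact h3.symm
  refine ⟨coef0 u, ?_⟩
  have h4 : toL2 u = (coef0 u) • (fourierLp 2 0 : L2) := by
    rwa [sub_eq_zero] at hv
  have h5 : ⇑(toL2 u) =ᵐ[μT] fun _ => coef0 u := by
    rw [h4]
    filter_upwards [Lp.coeFn_smul (coef0 u) (fourierLp 2 0 : L2), coeFn_fourierLp 2 (0:ℤ)]
      with z g1 g2
    rw [g1, Pi.smul_apply, g2, fourier_zero, smul_eq_mul, mul_one]
  exact ((toL2_coeFn u).symm.trans h5 : _)

/-- Core formula: `‖B_{e₁} f‖ = |⟪k̃₀, f⟫|` for `f ∈ K_u`. -/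
lemma norm_Bop_apply (u : Linf) (hu : IsInnerFn u) (f : Ku u) :
    ‖Bop u e1 f‖ = ‖⟪kk u, (f : L2)⟫_ℂ‖ := by
  classical
  set w : L2 := toL2 u with hw
  set g : L2 := Mmul e1 (f : L2) with hg
  set c : ℂ := ⟪w, g⟫_ℂ with hc
  -- c = ⟪kk u, f⟫
  have hckk : c = ⟪kk u, (f : L2)⟫_ℂ := by
    rw [hc, hg, inner_Mmul_e1_right, kk, inner_sub_left, inner_smul_left]
    rw [inner_E_eq_zero_of_H2 (Ku_le_H2 u f.2) (by norm_num : (-1:ℤ) < 0), mul_zero, sub_zero]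
  -- membership facts
  have hfH2 : (f : L2) ∈ H2 := Ku_le_H2 u f.2
  have hforth : (f : L2) ∈ (uH2 u)ᗮ := (Submodule.mem_inf.1 f.2).2
  have hwu : w = Mmul u (fourierLp 2 (0:ℤ)) := toL2_eq_Mmul_E0 u
  have hwH2 : w ∈ H2 := hu.memH2
  -- h := g - c • w ∈ Ku
  have hh : g - c • w ∈ Ku u := by
    rw [Ku, Submodule.mem_inf]
    constructor
    · exact Submodule.sub_mem _ (Mmul_e1_mem_H2 hfH2)
        (Submodule.smul_mem _ _ hwH2)
    · refine mem_orth_uH2_of u _ fun n => ?_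
      rw [inner_sub_right, inner_smul_right]
      have hscnd : ⟪Mmul u (fourierLp 2 (n : ℤ)), w⟫_ℂ = if (n : ℤ) = 0 then 1 else 0 := by
        rw [hwu, inner_Mmul_unimod u hu.unimod, inner_E]
      rcases Nat.eq_zero_or_pos n with hn | hn
      · subst hn
        have hfst : ⟪Mmul u (fourierLp 2 ((0:ℕ) : ℤ)), g⟫_ℂ = c := by
          rw [hc, hwu]; norm_num
        rw [hfst, hscnd]
        simp
      · have h1 : ⟪Mmul u (fourierLp 2 (n : ℤ)), g⟫_ℂ = 0 := by
          rw [hg, inner_Mmul_e1_right, Mmul_Mmul, Mmul_eneg1_E]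
          have hE : ((n : ℤ) - 1) = (((n - 1 : ℕ) : ℤ)) := by omega
          rw [hE]
          exact (Submodule.mem_orthogonal _ _).1 hforth _
            (Submodule.mem_map_of_mem (E_mem_H2 (n - 1)))
        rw [h1, hscnd, if_neg (by omega), mul_zero, sub_zero]
  -- c • w ∈ KuP
  have hcw : c • w ∈ KuP u := by
    refine Submodule.smul_mem _ _ (uH2_le_KuP u ?_)
    rw [hwu]
    exact Submodule.mem_map_of_mem (E_mem_H2 0)
  -- compute the projection
  have hBval : (Bop u e1 f : L2) = c • w := by
    have hdecomp : g = (g - c • w) + c • w := by abel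
    have : Bop u e1 f = Submodule.orthogonalProjectionOnto (KuP u) g := rfl
    rw [this, hdecomp, map_add]
    rw [Submodule.orthogonalProjectionOnto_apply_of_mem_orthogonal (Ku_le_KuP_orth u hh)]
    rw [zero_add]
    exact (Submodule.starProjection_eq_self_iff.2 hcw :)
  have : ‖Bop u e1 f‖ = ‖(Bop u e1 f : L2)‖ := rfl
  rw [this, hBval, norm_smul, norm_toL2 u hu, mul_one, hckk]


set_option maxHeartbeats 2000000 in
set_option synthInstance.maxHeartbeats 1000000 in
/-- `m(B_{e₁}) = 0` if `dim K_u > 1`, and `m(B_{e₁}) = √(1 - |u(0)|²)` if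
`dim K_u = 1`. -/
theorem minMod_B_shift (u : Linf) (hu : IsInnerFn u) (hnc : Nonconst u) :
    (1 < Module.rank ℂ (Ku u) → minMod (Bop u e1) = 0)
    ∧ (Module.rank ℂ (Ku u) = 1 →
        minMod (Bop u e1) = Real.sqrt (1 - ‖coef0 u‖ ^ 2)) := by
  have hkkmem : kk u ∈ Ku u := kk_mem_Ku u hu
  have hkk0 : kk u ≠ 0 := kk_ne_zero u hu hnc
  have hkknorm0 : ‖kk u‖ ≠ 0 := norm_ne_zero_iff.2 hkk0
  set v0 : Ku u := ⟨kk u, hkkmem⟩ with hv0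
  have hv0ne : v0 ≠ 0 := by
    intro h
    exact hkk0 (congrArg Subtype.val h)
  have hv0norm : ‖v0‖ = ‖kk u‖ := rfl
  constructor
  · -- rank > 1 case
    intro hrank
    haveI : CompleteSpace ↥(ℂ ∙ v0) := FiniteDimensional.complete ℂ _
    have hSne : (ℂ ∙ v0)ᗮ ≠ ⊥ := by
      intro hbot
      have htop : (ℂ ∙ v0) = ⊤ := Submodule.orthogonal_eq_bot_iff.1 hbot
      have h1 : Module.rank ℂ (Ku u) ≤ 1 := by
        have h2 := rank_span_le (R := ℂ) ({v0} : Set (Ku u))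
        rw [Cardinal.mk_singleton] at h2
        rw [← rank_top ℂ (Ku u), ← htop]
        exact h2
      exact absurd hrank (not_lt.2 h1)
    obtain ⟨x, hxS, hxne⟩ := (Submodule.ne_bot_iff _).1 hSne
    have hxinner : ⟪kk u, (x : L2)⟫_ℂ = 0 := by
      have h0 : ⟪v0, x⟫_ℂ = 0 :=
        (Submodule.mem_orthogonal _ _).1 hxS v0 (Submodule.mem_span_singleton_self _)
      rw [Submodule.coe_inner] at h0
      exact h0
    set f : Ku u := ((‖x‖ : ℂ))⁻¹ • x with hf
    have hfn : ‖f‖ = 1 := by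
      rw [hf, norm_smul, norm_inv, Complex.norm_real, Real.norm_eq_abs,
        _root_.abs_of_nonneg (norm_nonneg _)]
      exact inv_mul_cancel₀ (norm_ne_zero_iff.2 hxne)
    have hBzero : ‖Bop u e1 f‖ = 0 := by
      rw [norm_Bop_apply u hu f, hf, Submodule.coe_smul, inner_smul_right, hxinner, mul_zero,
        norm_zero]
    have hbdd : BddBelow (Set.range fun y : {x : Ku u // ‖x‖ = 1} => ‖Bop u e1 y.1‖) := by
      refine ⟨0, ?_⟩
      rintro r ⟨y, rfl⟩
      exact norm_nonneg _
    haveI : Nonempty {x : Ku u // ‖x‖ = 1} := ⟨⟨f, hfn⟩⟩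
    refine le_antisymm ?_ (le_ciInf fun y => norm_nonneg _)
    have hle := ciInf_le hbdd (⟨f, hfn⟩ : {x : Ku u // ‖x‖ = 1})
    rw [hBzero] at hle
    exact hle
  · -- rank = 1 case
    intro hrank
    obtain ⟨w0, hw0ne, hw0⟩ := rank_eq_one_iff.1 hrank
    obtain ⟨r0, hr0⟩ := hw0 v0
    have hr0ne : r0 ≠ 0 := by
      rintro rfl
      rw [zero_smul] at hr0
      exact hv0ne hr0.symm
    have hmul : ∀ f : Ku u, ∃ c : ℂ, f = c • v0 := by
      intro f
      obtain ⟨r, hr⟩ := hw0 f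
      refine ⟨r / r0, ?_⟩
      rw [← hr, ← hr0, smul_smul]
      congr 1
      field_simp
    have hnormkk : ‖kk u‖ = Real.sqrt (1 - ‖coef0 u‖ ^ 2) := by
      rw [← norm_kk_sq u hu, Real.sqrt_sq (norm_nonneg _)]
    have hval : ∀ y : {x : Ku u // ‖x‖ = 1}, ‖Bop u e1 y.1‖ = ‖kk u‖ := by
      rintro ⟨g, hg⟩
      obtain ⟨c, rfl⟩ := hmul g
      have hcabs : ‖c‖ * ‖kk u‖ = 1 := by
        rw [norm_smul, hv0norm] at hg
        exact hg
      have hcoe : ((c • v0 : Ku u) : L2) = c • kk u := by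
        rw [Submodule.coe_smul]
      have hinner : ⟪kk u, kk u⟫_ℂ = ((‖kk u‖ ^ 2 : ℝ) : ℂ) := by
        rw [inner_kk_self u hu, norm_kk_sq u hu]
        push_cast
        ring
      rw [norm_Bop_apply u hu, hcoe, inner_smul_right, norm_mul, hinner,
        Complex.norm_real, Real.norm_eq_abs, _root_.abs_of_nonneg (sq_nonneg _)]
      have hsplit : ‖c‖ * ‖kk u‖ ^ 2 = (‖c‖ * ‖kk u‖) * ‖kk u‖ := by ring
      rw [hsplit, hcabs, one_mul]
    haveI hne : Nonempty {x : Ku u // ‖x‖ = 1} := by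
      refine ⟨⟨((‖v0‖ : ℂ))⁻¹ • v0, ?_⟩⟩
      rw [norm_smul, norm_inv, Complex.norm_real, Real.norm_eq_abs,
        _root_.abs_of_nonneg (norm_nonneg _), hv0norm]
      exact inv_mul_cancel₀ hkknorm0
    rw [← hnormkk]
    unfold minMod
    rw [iInf_congr hval]
    exact ciInf_const

end DTTO
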